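/- Suppose a signal X of even length T is perturbed only in its detail Haar coefficients by δ_D, with |δ_D(k)| ≤ ε for all k. Then Σ_{m=0}^{T/2−1} |ρ_D(2m) − ρ(2m)| ≤ ε·(T/2 + 1)·Σ_{k=1}^{T/2} |C^H_k| + ε²·(T² + 2T)/8. -/

import Mathlib

private lemma sum_pair' (f : ℕ → ℝ) : ∀ j, ∑ t ∈ Finset.Icc 1 (2*j), f t
    = ∑ k ∈ Finset.Icc 1 j, (f (2*k-1) + f (2*k)) := by
  intro j
  induction j with
  | zero => simp
  | succ n ih =>
      have h1 : 2*(n+1) = (2*n+1)+1 := by ring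
      rw [h1, Finset.sum_Icc_succ_top (by omega), Finset.sum_Icc_succ_top (by omega), ih,
        Finset.sum_Icc_succ_top (by omega : 1 ≤ n+1)]
      have e1 : 2*(n+1)-1 = 2*n+1 := by omega
      have e2 : 2*(n+1) = 2*n+1+1 := by omega
      rw [e1, e2]
      ring

private lemma shift_sum' (N m : ℕ) (g : ℕ → ℝ) :
    ∑ k ∈ Finset.Icc 1 (N-m), g (k+m) = ∑ j ∈ Finset.Icc (m+1) (N-m+m), g j := by
  have h := Finset.sum_map (Finset.Icc 1 (N-m)) (addRightEmbedding m) g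
  rw [Finset.map_add_right_Icc] at h
  have e2 : 1 + m = m + 1 := by omega
  rw [e2] at h
  simp only [addRightEmbedding_apply] at h
  rw [← h]

/-- Bound on the total absolute change of even-lag autocorrelations under
bounded detail-coefficient perturbations. -/
theorem autocorrelation_bound_detail
    (T : ℕ) (hT : 0 < T) (hTeven : Even T)
    (X XD CL CH δD : ℕ → ℝ) (ε : ℝ) (hε : 0 ≤ ε)
    (hδ : ∀ k ∈ Finset.Icc 1 (T / 2), |δD k| ≤ ε)
    (hCL : ∀ k ∈ Finset.Icc 1 (T / 2),
      CL k = (X (2 * k - 1) + X (2 * k)) / Real.sqrt 2)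
    (hCH : ∀ k ∈ Finset.Icc 1 (T / 2),
      CH k = (X (2 * k - 1) - X (2 * k)) / Real.sqrt 2)
    (hXD1 : ∀ k ∈ Finset.Icc 1 (T / 2),
      XD (2 * k - 1) = CL k / Real.sqrt 2 + (CH k + δD k) / Real.sqrt 2)
    (hXD0 : ∀ k ∈ Finset.Icc 1 (T / 2),
      XD (2 * k) = CL k / Real.sqrt 2 - (CH k + δD k) / Real.sqrt 2)
    (ρ ρD : ℕ → ℝ)
    (hρ : ∀ l, ρ l = ∑ t ∈ Finset.Icc 1 (T - l), X (t + l) * X t)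
    (hρD : ∀ l, ρD l = ∑ t ∈ Finset.Icc 1 (T - l), XD (t + l) * XD t) :
    ∑ m ∈ Finset.range (T / 2), |ρD (2 * m) - ρ (2 * m)| ≤
      ε * ((T : ℝ) / 2 + 1) * ∑ k ∈ Finset.Icc 1 (T / 2), |CH k| +
      ε ^ 2 * ((T : ℝ) ^ 2 + 2 * (T : ℝ)) / 8 := by
  set N := T / 2 with hNdef
  have hTN : T = 2 * N := by
    rcases hTeven with ⟨r, hr⟩; omega
  have hs2 : Real.sqrt 2 ≠ 0 := by positivity
  have hs2sq : Real.sqrt 2 * Real.sqrt 2 = 2 := Real.mul_self_sqrt (by norm_num)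
  -- express XD in terms of X and δD
  have hXDval : ∀ j ∈ Finset.Icc 1 N,
      XD (2*j-1) = X (2*j-1) + δD j / Real.sqrt 2 ∧
      XD (2*j) = X (2*j) - δD j / Real.sqrt 2 := by
    intro j hj
    have h1 := hXD1 j hj
    have h0 := hXD0 j hj
    have hl := hCL j hj
    have hh := hCH j hj
    rw [hl, hh] at h1 h0
    constructor
    · rw [h1]; field_simp; ring_nf; rw [Real.sq_sqrt (by norm_num : (0:ℝ) ≤ 2)]
    · rw [h0]; field_simp; ring_nf; rw [Real.sq_sqrt (by norm_num : (0:ℝ) ≤ 2)]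
  have hCHval : ∀ j ∈ Finset.Icc 1 N,
      X (2*j-1) - X (2*j) = CH j * Real.sqrt 2 := by
    intro j hj
    rw [hCH j hj]
    field_simp
  -- key identity
  have key : ∀ m ∈ Finset.range N, ρD (2*m) - ρ (2*m)
      = ∑ k ∈ Finset.Icc 1 (N-m),
          (δD k * CH (k+m) + δD (k+m) * CH k + δD k * δD (k+m)) := by
    intro m hm
    have hmN : m < N := Finset.mem_range.mp hm
    have hTm : T - 2*m = 2*(N-m) := by omega
    rw [hρ, hρD, ← Finset.sum_sub_distrib, hTm,
      sum_pair' (fun t => XD (t + 2*m) * XD t - X (t + 2*m) * X t)]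
    apply Finset.sum_congr rfl
    intro k hk
    rw [Finset.mem_Icc] at hk
    have hkm : k ∈ Finset.Icc 1 N := Finset.mem_Icc.mpr (by omega)
    have hkmm : k + m ∈ Finset.Icc 1 N := Finset.mem_Icc.mpr (by omega)
    have e1 : 2*k-1 + 2*m = 2*(k+m)-1 := by omega
    have e2 : 2*k + 2*m = 2*(k+m) := by omega
    simp only [e1, e2]
    obtain ⟨hx1, hx0⟩ := hXDval k hkm
    obtain ⟨hy1, hy0⟩ := hXDval (k+m) hkmm
    have hc1 := hCHval k hkm
    have hc2 := hCHval (k+m) hkmm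
    rw [hx1, hx0, hy1, hy0]
    have expand : (X (2*(k+m)-1) + δD (k+m) / Real.sqrt 2) * (X (2*k-1) + δD k / Real.sqrt 2)
        - X (2*(k+m)-1) * X (2*k-1)
        + ((X (2*(k+m)) - δD (k+m) / Real.sqrt 2) * (X (2*k) - δD k / Real.sqrt 2)
        - X (2*(k+m)) * X (2*k))
        = (δD k / Real.sqrt 2) * (X (2*(k+m)-1) - X (2*(k+m)))
          + (δD (k+m) / Real.sqrt 2) * (X (2*k-1) - X (2*k))
          + 2 * (δD k / Real.sqrt 2) * (δD (k+m) / Real.sqrt 2) := by ring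
    rw [expand, hc1, hc2]
    field_simp
    rw [Real.sq_sqrt (by norm_num : (0:ℝ) ≤ 2)]; ring
  -- bound each lag
  have bound_m : ∀ m ∈ Finset.range N, |ρD (2*m) - ρ (2*m)|
      ≤ ∑ k ∈ Finset.Icc 1 (N-m), (ε * |CH (k+m)| + ε * |CH k| + ε^2) := by
    intro m hm
    have hmN : m < N := Finset.mem_range.mp hm
    rw [key m hm]
    refine le_trans (Finset.abs_sum_le_sum_abs _ _) (Finset.sum_le_sum ?_)
    intro k hk
    rw [Finset.mem_Icc] at hk
    have h1 : |δD k| ≤ ε := hδ k (Finset.mem_Icc.mpr (by omega))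
    have h2 : |δD (k+m)| ≤ ε := hδ (k+m) (Finset.mem_Icc.mpr (by omega))
    have habs : |δD k * CH (k+m) + δD (k+m) * CH k + δD k * δD (k+m)|
        ≤ |δD k| * |CH (k+m)| + |δD (k+m)| * |CH k| + |δD k| * |δD (k+m)| := by
      calc _ ≤ |δD k * CH (k+m) + δD (k+m) * CH k| + |δD k * δD (k+m)| := abs_add_le _ _
        _ ≤ |δD k * CH (k+m)| + |δD (k+m) * CH k| + |δD k * δD (k+m)| := by
              gcongr; exact abs_add_le _ _
        _ = _ := by rw [abs_mul, abs_mul, abs_mul]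
    refine le_trans habs ?_
    have := abs_nonneg (CH (k+m)); have := abs_nonneg (CH k); have := abs_nonneg (δD k)
    have := abs_nonneg (δD (k+m))
    nlinarith
  -- sum the bounds
  have total : ∑ m ∈ Finset.range N, |ρD (2*m) - ρ (2*m)|
      ≤ ∑ m ∈ Finset.range N, ∑ k ∈ Finset.Icc 1 (N-m),
          (ε * |CH (k+m)| + ε * |CH k| + ε^2) :=
    Finset.sum_le_sum bound_m
  -- compute the double sums
  have split : ∑ m ∈ Finset.range N, ∑ k ∈ Finset.Icc 1 (N-m),
      (ε * |CH (k+m)| + ε * |CH k| + ε^2)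
      = ε * (∑ m ∈ Finset.range N, ∑ k ∈ Finset.Icc 1 (N-m), |CH (k+m)|)
        + ε * (∑ m ∈ Finset.range N, ∑ k ∈ Finset.Icc 1 (N-m), |CH k|)
        + ε^2 * (∑ m ∈ Finset.range N, ((N:ℝ) - (m:ℝ))) := by
    simp only [Finset.sum_add_distrib, Finset.mul_sum, Finset.sum_const, nsmul_eq_mul,
      Nat.card_Icc]
    congr 1
    apply Finset.sum_congr rfl
    intro m hm
    have hmN : m < N := Finset.mem_range.mp hm
    have : (N - m + 1 - 1 : ℕ) = N - m := by omega
    rw [this]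
    push_cast [Nat.cast_sub (le_of_lt hmN)]
    ring
  have S1 : ∑ m ∈ Finset.range N, ∑ k ∈ Finset.Icc 1 (N-m), |CH (k+m)|
      = ∑ j ∈ Finset.Icc 1 N, (j : ℝ) * |CH j| := by
    have step : ∀ m ∈ Finset.range N,
        ∑ k ∈ Finset.Icc 1 (N-m), |CH (k+m)| = ∑ j ∈ Finset.Icc (m+1) N, |CH j| := by
      intro m hm
      have hmN : m < N := Finset.mem_range.mp hm
      have := shift_sum' N m (fun j => |CH j|)
      have e : N - m + m = N := by omega
      rw [e] at this
      exact this
    rw [Finset.sum_congr rfl step,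
      Finset.sum_comm' (t' := Finset.Icc 1 N) (s' := fun j => Finset.range j)
        (by intro m j; simp only [Finset.mem_Icc, Finset.mem_range]; omega)]
    apply Finset.sum_congr rfl
    intro j hj
    rw [Finset.sum_const, Finset.card_range, nsmul_eq_mul]
  have S2 : ∑ m ∈ Finset.range N, ∑ k ∈ Finset.Icc 1 (N-m), |CH k|
      = ∑ k ∈ Finset.Icc 1 N, ((N:ℝ) + 1 - (k:ℝ)) * |CH k| := by
    rw [Finset.sum_comm' (t' := Finset.Icc 1 N) (s' := fun k => Finset.range (N+1-k))
        (by intro m k; simp only [Finset.mem_Icc, Finset.mem_range]; omega)]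
    apply Finset.sum_congr rfl
    intro k hk
    rw [Finset.mem_Icc] at hk
    rw [Finset.sum_const, Finset.card_range, nsmul_eq_mul]
    push_cast [Nat.cast_sub (by omega : k ≤ N + 1)]
    ring
  have S3 : ∑ m ∈ Finset.range N, ((N:ℝ) - (m:ℝ)) = (N:ℝ) * ((N:ℝ) + 1) / 2 := by
    rw [Finset.sum_sub_distrib, Finset.sum_const, Finset.card_range, nsmul_eq_mul]
    have hc : (∑ m ∈ Finset.range N, (m:ℝ)) * 2 = (N:ℝ)^2 - (N:ℝ) := by
      have h := Finset.sum_range_id_mul_two N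
      have h2 : ((∑ m ∈ Finset.range N, m : ℕ) : ℝ) * 2 = ((N * (N-1) : ℕ) : ℝ) := by
        exact_mod_cast congrArg (Nat.cast : ℕ → ℝ) h
      rcases Nat.eq_zero_or_pos N with h0 | h0
      · simp [h0]
      · push_cast [Nat.cast_sub (by omega : 1 ≤ N)] at h2
        push_cast
        linarith
    linarith
  -- combine S1 + S2
  have S12 : ∑ j ∈ Finset.Icc 1 N, (j : ℝ) * |CH j|
      + ∑ k ∈ Finset.Icc 1 N, ((N:ℝ) + 1 - (k:ℝ)) * |CH k|
      = ((N:ℝ) + 1) * ∑ k ∈ Finset.Icc 1 N, |CH k| := by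
    rw [← Finset.sum_add_distrib, Finset.mul_sum]
    apply Finset.sum_congr rfl
    intro j hj
    ring
  have hNreal : ((T:ℝ) / 2 + 1) = (N:ℝ) + 1 := by
    rw [hTN]; push_cast; ring
  have hfinal : ε^2 * ((T:ℝ)^2 + 2*(T:ℝ)) / 8 = ε^2 * ((N:ℝ) * ((N:ℝ)+1) / 2) := by
    rw [hTN]; push_cast; ring
  calc ∑ m ∈ Finset.range N, |ρD (2*m) - ρ (2*m)|
      ≤ ε * (∑ m ∈ Finset.range N, ∑ k ∈ Finset.Icc 1 (N-m), |CH (k+m)|)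
        + ε * (∑ m ∈ Finset.range N, ∑ k ∈ Finset.Icc 1 (N-m), |CH k|)
        + ε^2 * (∑ m ∈ Finset.range N, ((N:ℝ) - (m:ℝ))) := by rw [← split]; exact total
    _ = ε * (((N:ℝ) + 1) * ∑ k ∈ Finset.Icc 1 N, |CH k|) + ε^2 * ((N:ℝ) * ((N:ℝ)+1) / 2) := by
        rw [S1, S2, S3, ← S12]; ring
    _ = ε * ((T : ℝ) / 2 + 1) * ∑ k ∈ Finset.Icc 1 N, |CH k|
        + ε ^ 2 * ((T : ℝ) ^ 2 + 2 * (T : ℝ)) / 8 := by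
        rw [hNreal, hfinal]; ring
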